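/- Let x,x' ∈ ℝ^d with h = x−x', let v ∈ ℝ^d be a unit vector, and let φ be uniformly distributed on [0,2π]. Define g(z) = (1−α)z + λ·cos(ω⟨z,v⟩+φ)·v for parameters α ∈ (0,1), λ>0, ω>0, and set δ = ω⟨h,v⟩. Then E_φ[‖g(x)−g(x')‖²] = (1−α)²‖h‖² + 2λ²·sin²(δ/2). -/

import Mathlib

open Real

lemma int_sin_shift (c : ℝ) : ∫ φ in (0:ℝ)..(2*π), Real.sin (φ + c) = 0 := by
  rw [intervalIntegral.integral_comp_add_right (f := Real.sin), integral_sin]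
  simp [Real.cos_add_two_pi, add_comm (2*π) c]

lemma int_sin_sq_shift (c : ℝ) : ∫ φ in (0:ℝ)..(2*π), Real.sin (φ + c) ^ 2 = π := by
  rw [intervalIntegral.integral_comp_add_right (f := fun t => Real.sin t ^ 2), integral_sin_sq]
  have h1 : Real.sin (2*π + c) = Real.sin c := by rw [add_comm]; exact Real.sin_add_two_pi c
  have h2 : Real.cos (2*π + c) = Real.cos c := by rw [add_comm]; exact Real.cos_add_two_pi c
  rw [h1, h2]; ring

lemma norm_sq_aux {d : ℕ} (α K : ℝ) (h v : EuclideanSpace ℝ (Fin d)) (hv : ‖v‖ = 1) (s : ℝ) :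
    ‖(1 - α) • h + (K * s) • v‖ ^ 2
      = (1 - α)^2 * ‖h‖^2 + (2 * (1 - α) * (inner ℝ h v : ℝ) * K) * s + K^2 * s^2 := by
  rw [← real_inner_self_eq_norm_sq]
  simp only [inner_add_add_self, real_inner_smul_left, real_inner_smul_right]
  rw [real_inner_self_eq_norm_sq h, real_inner_self_eq_norm_sq v, hv]
  rw [real_inner_comm v h]
  ring

theorem expected_expansion_single_vector
    {d : ℕ} (α lam ω : ℝ) (hα0 : 0 < α) (hα1 : α < 1) (hlam : 0 < lam) (hω : 0 < ω)
    (v : EuclideanSpace ℝ (Fin d)) (hv : ‖v‖ = 1)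
    (x x' : EuclideanSpace ℝ (Fin d)) (h : EuclideanSpace ℝ (Fin d)) (hh : h = x - x')
    (δ : ℝ) (hδ : δ = ω * (inner ℝ h v : ℝ))
    (g : EuclideanSpace ℝ (Fin d) → ℝ → EuclideanSpace ℝ (Fin d))
    (hg : ∀ z φ, g z φ = (1 - α) • z + (lam * Real.cos (ω * (inner ℝ z v : ℝ) + φ)) • v) :
    (2 * π)⁻¹ * ∫ φ in (0:ℝ)..(2 * π), ‖g x φ - g x' φ‖ ^ 2
      = (1 - α) ^ 2 * ‖h‖ ^ 2 + 2 * lam ^ 2 * Real.sin (δ / 2) ^ 2 := by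
  have hδ' : δ = ω * (inner ℝ x v : ℝ) - ω * (inner ℝ x' v : ℝ) := by
    rw [hδ, hh, inner_sub_left]; ring
  set c := (ω * (inner ℝ x v : ℝ) + ω * (inner ℝ x' v : ℝ)) / 2 with hc
  set K := lam * (-2) * Real.sin (δ / 2) with hK
  have key : ∀ φ : ℝ, ‖g x φ - g x' φ‖ ^ 2
      = (1 - α)^2 * ‖h‖^2 + (2 * (1 - α) * (inner ℝ h v : ℝ) * K) * Real.sin (φ + c)
        + K^2 * Real.sin (φ + c) ^ 2 := by
    intro φ
    have hs : lam * Real.cos (ω * (inner ℝ x v : ℝ) + φ)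
        - lam * Real.cos (ω * (inner ℝ x' v : ℝ) + φ) = K * Real.sin (φ + c) := by
      have hcc := Real.cos_sub_cos (ω * (inner ℝ x v : ℝ) + φ) (ω * (inner ℝ x' v : ℝ) + φ)
      have e1 : (ω * (inner ℝ x v : ℝ) + φ + (ω * (inner ℝ x' v : ℝ) + φ)) / 2 = φ + c := by
        rw [hc]; ring
      have e2 : (ω * (inner ℝ x v : ℝ) + φ - (ω * (inner ℝ x' v : ℝ) + φ)) / 2 = δ / 2 := by
        rw [hδ']; ring
      rw [e1, e2] at hcc
      rw [show lam * Real.cos (ω * (inner ℝ x v : ℝ) + φ)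
          - lam * Real.cos (ω * (inner ℝ x' v : ℝ) + φ)
          = lam * (Real.cos (ω * (inner ℝ x v : ℝ) + φ)
            - Real.cos (ω * (inner ℝ x' v : ℝ) + φ)) by ring, hcc, hK]
      ring
    have hdiff : g x φ - g x' φ = (1 - α) • h + (K * Real.sin (φ + c)) • v := by
      rw [hg, hg, hh, ← hs]
      module
    rw [hdiff, norm_sq_aux α K h v hv]
  simp only [key]
  rw [intervalIntegral.integral_add, intervalIntegral.integral_add,
    intervalIntegral.integral_const, intervalIntegral.integral_const_mul,
    intervalIntegral.integral_const_mul, int_sin_shift, int_sin_sq_shift]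
  · have hπ : (2 * π) ≠ 0 := by positivity
    field_simp [hK]
    ring
  · exact intervalIntegrable_const
  · exact ((continuous_const.mul (Real.continuous_sin.comp (continuous_id.add continuous_const))).intervalIntegrable _ _)
  · exact (intervalIntegrable_const.add ((continuous_const.mul (Real.continuous_sin.comp (continuous_id.add continuous_const))).intervalIntegrable _ _))
  · exact ((continuous_const.mul ((Real.continuous_sin.comp (continuous_id.add continuous_const)).pow 2)).intervalIntegrable _ _)
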